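/- Let n ≥ 2, a_1,…,a_{n-1} nonzero reals, k_1,…,k_{n-1} integers ≥ 2, R(ξ') = Σ_j a_j ξ_j^{k_j}, 1/q = Σ_j 1/k_j, and p ∈ [1,∞). Suppose there is a constant C_p > 0 such that (∫_{ℝ^{n-1}} |φ̂(ξ', R(ξ'))|² dξ')^{1/2} ≤ C_p ‖φ‖_{L^p(ℝⁿ)} for all Schwartz functions φ on ℝⁿ. Then p = 2 - 2/(2 + 1/q), i.e., 1 + 1/(2q) - (1 + 1/q)/p = 0. -/

import Mathlib

open MeasureTheory Filter Set Real

/-- The Fourier transform `φ̂(ξ) = (2π)^{-n/2} ∫ φ(x) e^{-i x·ξ} dx`. -/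
noncomputable def fourierTrans (n : ℕ) (φ : EuclideanSpace ℝ (Fin n) → ℂ)
    (ξ : EuclideanSpace ℝ (Fin n)) : ℂ :=
  ((2 * π) ^ (-(n : ℝ) / 2) : ℝ) *
    ∫ x : EuclideanSpace ℝ (Fin n), φ x * Complex.exp (-Complex.I * (↑(∑ j, x j * ξ j)))

open scoped FourierTransform RealInnerProductSpace

set_option linter.unusedSectionVars false
set_option linter.deprecated false
set_option maxHeartbeats 1000000
section Aux

variable {G : Type*} [NormedAddCommGroup G] [NormedSpace ℝ G]

lemma aux_cov {F : Type*} [NormedAddCommGroup F] [NormedSpace ℝ F] [MeasureSpace F]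
    [BorelSpace F] [FiniteDimensional ℝ F]
    [(volume : Measure F).IsAddHaarMeasure]
    (T : F →ₗ[ℝ] F) (hT : LinearMap.det T ≠ 0) (f : F → G) (hf : Continuous f) :
    ∫ x, f (T x) = |LinearMap.det T|⁻¹ • ∫ x, f x := by
  rw [← integral_map (T.continuous_of_finiteDimensional).aemeasurable
      hf.aestronglyMeasurable,
    Measure.map_linearMap_addHaar_eq_smul_addHaar volume hT, integral_smul_measure,
    ENNReal.toReal_ofReal (abs_nonneg _), abs_inv]

variable {ι : Type*} [Fintype ι] [DecidableEq ι]

noncomputable def diagPi (c : ι → ℝ) (hc : ∀ i, c i ≠ 0) : (ι → ℝ) ≃ₗ[ℝ] (ι → ℝ) :=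
  LinearEquiv.piCongrRight fun i => LinearEquiv.smulOfNeZero ℝ ℝ (c i) (hc i)

lemma diagPi_apply (c : ι → ℝ) (hc : ∀ i, c i ≠ 0) (x : ι → ℝ) :
    diagPi c hc x = fun i => c i * x i := by
  funext i
  simp [diagPi, LinearEquiv.smulOfNeZero, LinearEquiv.smulOfUnit, DistribMulAction.toLinearEquiv, DistribMulAction.toLinearMap, smul_eq_mul]

lemma diagPi_eq_toLin' (c : ι → ℝ) (hc : ∀ i, c i ≠ 0) :
    ((diagPi c hc : (ι → ℝ) ≃ₗ[ℝ] (ι → ℝ)) : (ι → ℝ) →ₗ[ℝ] (ι → ℝ))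
      = Matrix.toLin' (Matrix.diagonal c) := by
  apply LinearMap.ext
  intro x
  rw [LinearEquiv.coe_coe, diagPi_apply]
  funext i
  simp [Matrix.toLin'_apply, Matrix.mulVec_diagonal]

lemma diagPi_det (c : ι → ℝ) (hc : ∀ i, c i ≠ 0) :
    LinearMap.det ((diagPi c hc : (ι → ℝ) ≃ₗ[ℝ] (ι → ℝ)) : (ι → ℝ) →ₗ[ℝ] (ι → ℝ))
      = ∏ i, c i := by
  rw [diagPi_eq_toLin', LinearMap.det_toLin', Matrix.det_diagonal]

lemma cov_pi (c : ι → ℝ) (hc : ∀ i, c i ≠ 0) (f : (ι → ℝ) → G) (hf : Continuous f) :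
    ∫ x : ι → ℝ, f (fun i => c i * x i) = |∏ i, c i|⁻¹ • ∫ x, f x := by
  have h := aux_cov ((diagPi c hc : (ι → ℝ) ≃ₗ[ℝ] (ι → ℝ)) : (ι → ℝ) →ₗ[ℝ] (ι → ℝ))
    (by rw [diagPi_det]; exact Finset.prod_ne_zero_iff.2 fun i _ => hc i) f hf
  simp only [LinearEquiv.coe_coe] at h
  simp only [diagPi_apply] at h
  rw [h, diagPi_det]

noncomputable def diagE (N : ℕ) (c : Fin N → ℝ) (hc : ∀ i, c i ≠ 0) :
    EuclideanSpace ℝ (Fin N) ≃L[ℝ] EuclideanSpace ℝ (Fin N) :=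
  (PiLp.continuousLinearEquiv 2 ℝ (fun _ : Fin N => ℝ)).trans
    (((diagPi c hc).toContinuousLinearEquiv).trans
      (PiLp.continuousLinearEquiv 2 ℝ (fun _ : Fin N => ℝ)).symm)

lemma diagE_apply (N : ℕ) (c : Fin N → ℝ) (hc : ∀ i, c i ≠ 0)
    (x : EuclideanSpace ℝ (Fin N)) (i : Fin N) :
    diagE N c hc x i = c i * x i := by
  simp [diagE, diagPi_apply]

lemma diagE_det (N : ℕ) (c : Fin N → ℝ) (hc : ∀ i, c i ≠ 0) :
    LinearMap.det ((diagE N c hc).toContinuousLinearMap :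
      EuclideanSpace ℝ (Fin N) →ₗ[ℝ] EuclideanSpace ℝ (Fin N)) = ∏ i, c i := by
  have e := (WithLp.linearEquiv 2 ℝ (∀ _ : Fin N, ℝ)).symm
  have heq : ((diagE N c hc).toContinuousLinearMap :
      EuclideanSpace ℝ (Fin N) →ₗ[ℝ] EuclideanSpace ℝ (Fin N))
      = ((WithLp.linearEquiv 2 ℝ (∀ _ : Fin N, ℝ)).symm :
          (Fin N → ℝ) ≃ₗ[ℝ] EuclideanSpace ℝ (Fin N)) ∘ₗ
        (((diagPi c hc : (Fin N → ℝ) ≃ₗ[ℝ] (Fin N → ℝ)) :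
            (Fin N → ℝ) →ₗ[ℝ] (Fin N → ℝ)) ∘ₗ
          ((WithLp.linearEquiv 2 ℝ (∀ _ : Fin N, ℝ)).symm.symm :
            EuclideanSpace ℝ (Fin N) ≃ₗ[ℝ] (Fin N → ℝ))) := rfl
  rw [heq, LinearMap.det_conj, diagPi_det]

lemma cov_E (N : ℕ) (c : Fin N → ℝ) (hc : ∀ i, c i ≠ 0)
    (f : EuclideanSpace ℝ (Fin N) → G) (hf : Continuous f) :
    ∫ x : EuclideanSpace ℝ (Fin N), f (diagE N c hc x) = |∏ i, c i|⁻¹ • ∫ x, f x := by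
  have h := aux_cov ((diagE N c hc).toContinuousLinearMap :
      EuclideanSpace ℝ (Fin N) →ₗ[ℝ] EuclideanSpace ℝ (Fin N))
    (by rw [diagE_det]; exact Finset.prod_ne_zero_iff.2 fun i _ => hc i) f hf
  simpa only [diagE_det, ContinuousLinearMap.coe_coe, ContinuousLinearEquiv.coe_coe] using h

end Aux

lemma exists_witness (N : ℕ) :
    ∃ φ : SchwartzMap (EuclideanSpace ℝ (Fin N)) ℂ,
      (∫ x : EuclideanSpace ℝ (Fin N), φ x) ≠ 0 := by
  set E := EuclideanSpace ℝ (Fin N)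
  have b : ContDiffBump (0 : E) := ⟨1, 2, one_pos, one_lt_two⟩
  let f : E → ℝ := fun x => b x
  have hfsmooth : ContDiff ℝ ((⊤ : ℕ∞) : WithTop ℕ∞) f := b.contDiff
  have hfc : HasCompactSupport f := b.hasCompactSupport
  let g : E → ℂ := fun x => (f x : ℂ)
  have hgsmooth : ContDiff ℝ ((⊤ : ℕ∞) : WithTop ℕ∞) g :=
    Complex.ofRealCLM.contDiff.comp hfsmooth
  have hgc : HasCompactSupport g := hfc.comp_left (g := (↑· : ℝ → ℂ)) Complex.ofReal_zero
  have hdecay : ∀ (k n : ℕ), ∃ C, ∀ x, ‖x‖ ^ k * ‖iteratedFDeriv ℝ n g x‖ ≤ C := by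
    intro k n
    have h1 : Continuous fun x => ‖x‖ ^ k * ‖iteratedFDeriv ℝ n g x‖ := by
      have hcn : Continuous fun x => iteratedFDeriv ℝ n g x :=
        hgsmooth.continuous_iteratedFDeriv (m := n) (by exact_mod_cast le_top)
      exact ((continuous_norm.pow k)).mul hcn.norm
    have h2 : HasCompactSupport fun x => ‖x‖ ^ k * ‖iteratedFDeriv ℝ n g x‖ :=
      ((hgc.iteratedFDeriv n).norm).mul_left
    obtain ⟨C, hC⟩ := h1.bounded_above_of_compact_support h2
    refine ⟨C, fun x => (le_abs_self _).trans ?_⟩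
    have := hC x
    rwa [Real.norm_eq_abs] at this
  refine ⟨⟨g, hgsmooth, hdecay⟩, ?_⟩
  have hpos : (0 : ℝ) < ∫ x : E, f x := b.integral_pos
  show (∫ x : E, g x) ≠ 0
  have hor : (∫ x : E, g x) = ((∫ x : E, f x : ℝ) : ℂ) := integral_ofReal
  rw [hor]
  exact_mod_cast hpos.ne'
open scoped FourierTransform RealInnerProductSpace




lemma fourierTrans_eq (N : ℕ) (φ : EuclideanSpace ℝ (Fin N) → ℂ)
    (ξ : EuclideanSpace ℝ (Fin N)) :
    fourierTrans N φ ξ = ((2 * π) ^ (-(N : ℝ) / 2) : ℝ) * 𝓕 φ ((2 * π)⁻¹ • ξ) := by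
  rw [fourierTrans, Real.fourier_eq']
  congr 1
  refine integral_congr_ae (Eventually.of_forall fun x => ?_)
  have hinner : ⟪x, (2 * π)⁻¹ • ξ⟫ = (2 * π)⁻¹ * ∑ j, x j * ξ j := by
    simp only [PiLp.inner_apply, RCLike.inner_apply, starRingEnd_apply, star_trivial,
      PiLp.smul_apply, smul_eq_mul, Finset.mul_sum]
    exact Finset.sum_congr rfl fun j _ => by ring
  show φ x * Complex.exp (-Complex.I * (↑(∑ j, x j * ξ j))) =
      Complex.exp (↑(-2 * π * ⟪x, (2 * π)⁻¹ • ξ⟫) * Complex.I) • φ x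
  rw [hinner]
  have h2π : (2 * π) ≠ 0 := by positivity
  have harg : -2 * π * ((2 * π)⁻¹ * ∑ j, x j * ξ j) = -∑ j, x j * ξ j := by
    field_simp
  rw [harg, smul_eq_mul]
  push_cast
  ring

lemma fourierTrans_continuous (N : ℕ) (φ : SchwartzMap (EuclideanSpace ℝ (Fin N)) ℂ) :
    Continuous (fourierTrans N ⇑φ) := by
  have h : fourierTrans N ⇑φ = fun ξ =>
      ((2 * π) ^ (-(N : ℝ) / 2) : ℝ) *
        (SchwartzMap.fourierTransformCLM ℂ φ) ((2 * π)⁻¹ • ξ) := by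
    funext ξ
    rw [fourierTrans_eq]
    congr 1
  rw [h]
  exact continuous_const.mul
    ((SchwartzMap.fourierTransformCLM ℂ φ).continuous.comp (continuous_const_smul _))

lemma fourierTrans_decay (N d : ℕ) (φ : SchwartzMap (EuclideanSpace ℝ (Fin N)) ℂ) :
    ∃ M : ℝ, 0 ≤ M ∧ ∀ ξ : EuclideanSpace ℝ (Fin N),
      ‖fourierTrans N ⇑φ ξ‖ ≤ M * ((1 + ‖ξ‖) ^ d)⁻¹ := by
  set Ψ := SchwartzMap.fourierTransformCLM ℂ φ with hΨ
  have hbound := fun (x : EuclideanSpace ℝ (Fin N)) =>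
    SchwartzMap.one_add_le_sup_seminorm_apply (𝕜 := ℝ) (m := (d, 0)) (le_refl d)
      (le_refl 0) Ψ x
  set B := 2 ^ d * ((Finset.Iic (d, 0)).sup fun m' =>
    SchwartzMap.seminorm ℝ m'.1 m'.2) Ψ with hB
  have hB0 : 0 ≤ B := by positivity
  have hτ : (0:ℝ) < (2 * π)⁻¹ := by positivity
  have hτ1 : (2 * π)⁻¹ ≤ 1 := by
    rw [inv_le_one_iff₀]
    right
    nlinarith [Real.pi_gt_three]
  refine ⟨(2 * π) ^ (-(N : ℝ) / 2) * B * (2 * π) ^ d, by positivity, fun ξ => ?_⟩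
  have key : ‖fourierTrans N ⇑φ ξ‖
      = (2 * π) ^ (-(N : ℝ) / 2) * ‖Ψ ((2 * π)⁻¹ • ξ)‖ := by
    rw [fourierTrans_eq]
    rw [norm_mul, Complex.norm_real, Real.norm_eq_abs,
      abs_of_pos (Real.rpow_pos_of_pos (by positivity) _)]
    rfl
  rw [key]
  have h1 : ‖Ψ ((2 * π)⁻¹ • ξ)‖ ≤ B * ((1 + ‖(2 * π)⁻¹ • ξ‖) ^ d)⁻¹ := by
    have hb := hbound ((2 * π)⁻¹ • ξ)
    rw [norm_iteratedFDeriv_zero] at hb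
    have hpos : (0:ℝ) < (1 + ‖(2 * π)⁻¹ • ξ‖) ^ d := by positivity
    calc ‖Ψ ((2 * π)⁻¹ • ξ)‖
        ≤ B / (1 + ‖(2 * π)⁻¹ • ξ‖) ^ d := (le_div_iff₀ hpos).2 (by linarith [hb])
      _ = B * ((1 + ‖(2 * π)⁻¹ • ξ‖) ^ d)⁻¹ := div_eq_mul_inv _ _
  have hw : (2 * π)⁻¹ * (1 + ‖ξ‖) ≤ 1 + ‖(2 * π)⁻¹ • ξ‖ := by
    rw [norm_smul, Real.norm_eq_abs, abs_of_pos hτ]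
    nlinarith [norm_nonneg ξ]
  have h2 : ((1 + ‖(2 * π)⁻¹ • ξ‖) ^ d)⁻¹ ≤ (2 * π) ^ d * ((1 + ‖ξ‖) ^ d)⁻¹ := by
    have hle : ((2 * π)⁻¹ * (1 + ‖ξ‖)) ^ d ≤ (1 + ‖(2 * π)⁻¹ • ξ‖) ^ d :=
      pow_le_pow_left₀ (by positivity) hw d
    have hpos2 : (0:ℝ) < ((2 * π)⁻¹ * (1 + ‖ξ‖)) ^ d := by positivity
    have := inv_anti₀ hpos2 hle
    calc ((1 + ‖(2 * π)⁻¹ • ξ‖) ^ d)⁻¹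
        ≤ (((2 * π)⁻¹ * (1 + ‖ξ‖)) ^ d)⁻¹ := this
      _ = (2 * π) ^ d * ((1 + ‖ξ‖) ^ d)⁻¹ := by
          rw [mul_pow, mul_inv, inv_pow, inv_inv]
  calc (2 * π) ^ (-(N : ℝ) / 2) * ‖Ψ ((2 * π)⁻¹ • ξ)‖
      ≤ (2 * π) ^ (-(N : ℝ) / 2) * (B * ((1 + ‖(2 * π)⁻¹ • ξ‖) ^ d)⁻¹) := by
        have hρ : (0:ℝ) < (2 * π) ^ (-(N : ℝ) / 2) :=
          Real.rpow_pos_of_pos (by positivity) _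
        exact mul_le_mul_of_nonneg_left h1 hρ.le
    _ ≤ (2 * π) ^ (-(N : ℝ) / 2) * (B * ((2 * π) ^ d * ((1 + ‖ξ‖) ^ d)⁻¹)) := by
        have hρ : (0:ℝ) ≤ (2 * π) ^ (-(N : ℝ) / 2) :=
          (Real.rpow_pos_of_pos (by positivity) _).le
        exact mul_le_mul_of_nonneg_left (mul_le_mul_of_nonneg_left h2 hB0) hρ
    _ = (2 * π) ^ (-(N : ℝ) / 2) * B * (2 * π) ^ d * ((1 + ‖ξ‖) ^ d)⁻¹ := by ring

lemma ft_sq_integrable (m : ℕ) (φ : SchwartzMap (EuclideanSpace ℝ (Fin (m+1))) ℂ)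
    (emb : (Fin m → ℝ) → EuclideanSpace ℝ (Fin (m+1)))
    (hembc : Continuous emb) (hembn : ∀ ξ', ‖ξ'‖ ≤ ‖emb ξ'‖) :
    Integrable (fun ξ' : Fin m → ℝ => ‖fourierTrans (m+1) ⇑φ (emb ξ')‖ ^ 2) := by
  obtain ⟨M, hM0, hM⟩ := fourierTrans_decay (m+1) (m+1) φ
  have hcont : Continuous fun ξ' : Fin m → ℝ => ‖fourierTrans (m+1) ⇑φ (emb ξ')‖ ^ 2 :=
    (((fourierTrans_continuous _ φ).comp hembc).norm).pow 2
  have hrk : ((Module.finrank ℝ (Fin m → ℝ) : ℝ)) < (2 * (m + 1) : ℕ) := by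
    simp [Module.finrank_fintype_fun_eq_card]
    push_cast
    linarith
  have hint : Integrable
      (fun ξ' : Fin m → ℝ => M ^ 2 * (1 + ‖ξ'‖) ^ (-((2 * (m + 1) : ℕ) : ℝ))) :=
    (integrable_one_add_norm hrk).const_mul _
  refine hint.mono' hcont.aestronglyMeasurable (Filter.Eventually.of_forall fun ξ' => ?_)
  have hpos : (0:ℝ) < 1 + ‖ξ'‖ := by positivity
  have hb1 : ‖fourierTrans (m+1) ⇑φ (emb ξ')‖ ≤ M * ((1 + ‖ξ'‖) ^ (m+1))⁻¹ := by
    refine (hM (emb ξ')).trans ?_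
    have h' : (1 + ‖ξ'‖) ^ (m+1) ≤ (1 + ‖emb ξ'‖) ^ (m+1) :=
      pow_le_pow_left₀ hpos.le (by linarith [hembn ξ']) _
    exact mul_le_mul_of_nonneg_left (inv_anti₀ (by positivity) h') hM0
  rw [Real.norm_eq_abs, abs_of_nonneg (by positivity)]
  calc ‖fourierTrans (m+1) ⇑φ (emb ξ')‖ ^ 2
      ≤ (M * ((1 + ‖ξ'‖) ^ (m+1))⁻¹) ^ 2 :=
        pow_le_pow_left₀ (norm_nonneg _) hb1 2
    _ = M ^ 2 * (1 + ‖ξ'‖) ^ (-((2 * (m + 1) : ℕ) : ℝ)) := by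
        rw [mul_pow, ← inv_pow, ← pow_mul, Real.rpow_neg hpos.le, Real.rpow_natCast,
          inv_pow]
        ring_nf

lemma rpow_finset_sum {s : ℝ} (hs : 0 < s) {ι : Type*} (t : Finset ι) (e : ι → ℝ) :
    s ^ (∑ i ∈ t, e i) = ∏ i ∈ t, s ^ (e i) := by
  classical
  induction t using Finset.induction with
  | empty => simp
  | insert x t hx ih => rw [Finset.sum_insert hx, Finset.prod_insert hx, Real.rpow_add hs, ih]

lemma exponent_zero {β K : ℝ} (h : ∀ s : ℝ, 0 < s → s ^ β ≤ K) : β = 0 := by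
  have hK : 1 ≤ K := by simpa using h 1 one_pos
  by_contra hβ
  have h2 : (K + 1) ^ (β⁻¹ * β) ≤ K := by
    rw [Real.rpow_mul (by linarith)]
    exact h _ (Real.rpow_pos_of_pos (by linarith) _)
  rw [inv_mul_cancel₀ hβ, Real.rpow_one] at h2
  linarith

/-- Necessity of the exponent: if the restriction inequality
`(∫ |φ̂(ξ',R(ξ'))|² dξ')^{1/2} ≤ C_p ‖φ‖_{L^p}` holds for all Schwartz `φ`, where
`R(ξ') = Σ a_j ξ_j^{k_j}` and `1/q = Σ 1/k_j`, then `p = 2 - 2/(2 + 1/q)`. -/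
theorem stmt_11 (n : ℕ) (hn : 2 ≤ n) (a : Fin (n - 1) → ℝ) (ha : ∀ j, a j ≠ 0)
    (k : Fin (n - 1) → ℕ) (hk : ∀ j, 2 ≤ k j)
    (R : (Fin (n - 1) → ℝ) → ℝ) (hR : ∀ ξ', R ξ' = ∑ j, a j * (ξ' j) ^ (k j))
    (p : ℝ) (hp : 1 ≤ p) (C : ℝ) (hC : 0 < C)
    (hineq : ∀ φ : SchwartzMap (EuclideanSpace ℝ (Fin n)) ℂ,
      (∫ ξ' : Fin (n - 1) → ℝ,
          ‖fourierTrans n (fun x => φ x)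
            (WithLp.toLp 2 (fun j : Fin n => if h : (j : ℕ) < n - 1 then ξ' ⟨j, h⟩ else R (fun l => ξ' l)))‖ ^ 2) ^
          ((1 : ℝ) / 2) ≤
        C * (∫ x : EuclideanSpace ℝ (Fin n), ‖φ x‖ ^ p) ^ ((1 : ℝ) / p)) :
    p = 2 - 2 / (2 + ∑ j, (1 : ℝ) / (k j : ℝ)) := by
  obtain ⟨m, rfl⟩ : ∃ m, n = m + 1 := ⟨n - 1, by omega⟩
  have hm : 1 ≤ m := by omega
  have hk0 : ∀ j : Fin m, (k j : ℝ) ≠ 0 := fun j => Nat.cast_ne_zero.2 (by have := hk j; omega)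
  set Q : ℝ := ∑ j : Fin m, (1 : ℝ) / (k j : ℝ) with hQdef
  show p = 2 - 2 / (2 + Q)
  have hQpos : 0 < Q := by
    rw [hQdef]
    refine Finset.sum_pos (fun j _ => ?_) ⟨⟨0, hm⟩, Finset.mem_univ _⟩
    have : (0:ℝ) < (k j : ℝ) := by exact_mod_cast (by have := hk j; omega : 0 < k j)
    positivity
  have hRc : Continuous R := by
    have hfun : R = fun ξ' : Fin m → ℝ => ∑ j : Fin m, a j * (ξ' j) ^ (k j) :=
      funext fun ξ' => hR ξ'
    rw [hfun]
    exact continuous_finset_sum _ fun j _ =>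
      continuous_const.mul ((continuous_apply j).pow _)
  set P := PiLp.continuousLinearEquiv 2 ℝ (fun _ : Fin (m+1) => ℝ) with hP
  have hPs : ∀ (v : Fin (m+1) → ℝ) (j : Fin (m+1)), (P.symm v) j = v j := fun v j => rfl
  set emb : (Fin m → ℝ) → EuclideanSpace ℝ (Fin (m + 1)) := fun ξ' =>
    P.symm (fun j => if h : (j : ℕ) < m then ξ' ⟨j, h⟩ else R fun l => ξ' l) with hembdef
  have hembapp : ∀ (ξ' : Fin m → ℝ) (j : Fin (m+1)),
      emb ξ' j = if h : (j : ℕ) < m then ξ' ⟨j, h⟩ else R fun l => ξ' l := fun ξ' j => rfl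
  have hembc : Continuous emb := by
    refine P.symm.continuous.comp (continuous_pi fun j => ?_)
    by_cases h : (j : ℕ) < m
    · simpa [h] using (continuous_apply (⟨(j : ℕ), h⟩ : Fin m))
    · refine hRc.congr fun a => ?_
      simp [h]
  have hcoord : ∀ (x : EuclideanSpace ℝ (Fin (m+1))) (i : Fin (m+1)), |x i| ≤ ‖x‖ := by
    intro x i
    rw [EuclideanSpace.norm_eq, ← Real.sqrt_sq_eq_abs]
    apply Real.sqrt_le_sqrt
    have := Finset.single_le_sum (f := fun i => ‖x i‖ ^ 2)
      (fun i _ => by positivity) (Finset.mem_univ i)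
    simpa [Real.norm_eq_abs, sq_abs] using this
  have hembn : ∀ ξ' : Fin m → ℝ, ‖ξ'‖ ≤ ‖emb ξ'‖ := by
    intro ξ'
    rw [pi_norm_le_iff_of_nonneg (norm_nonneg _)]
    intro j
    have h2 := hcoord (emb ξ') ⟨(j : ℕ), by omega⟩
    have h3 : emb ξ' ⟨(j : ℕ), by omega⟩ = ξ' j := by
      rw [hembapp]
      simp [j.isLt]
    rw [h3] at h2
    simpa [Real.norm_eq_abs] using h2
  obtain ⟨φ, hφint⟩ := exists_witness (m + 1)
  set A : ℝ := ∫ ξ' : Fin m → ℝ, ‖fourierTrans (m+1) (fun x => φ x) (emb ξ')‖ ^ 2 with hAdef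
  set B : ℝ := ∫ x : EuclideanSpace ℝ (Fin (m+1)), ‖φ x‖ ^ p with hBdef
  have hA0 : 0 ≤ A := by
    rw [hAdef]; exact integral_nonneg fun ξ' => by positivity
  have hB0 : 0 ≤ B := by
    rw [hBdef]
    exact integral_nonneg fun x => Real.rpow_nonneg (norm_nonneg _) _
  have hApos : 0 < A := by
    have hFc : Continuous fun ξ' : Fin m → ℝ =>
        ‖fourierTrans (m+1) (fun x => φ x) (emb ξ')‖ ^ 2 :=
      (((fourierTrans_continuous (m+1) φ).comp hembc).norm).pow 2
    have hInt := ft_sq_integrable m φ emb hembc hembn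
    rw [hAdef, integral_pos_iff_support_of_nonneg (fun ξ' => by positivity) hInt]
    have h0 : emb 0 = 0 := by
      ext j
      rw [hembapp]
      by_cases h : (j : ℕ) < m
      · simp [h]
      · have hr0 : R (fun _ => (0:ℝ)) = 0 := by
          rw [hR]
          refine Finset.sum_eq_zero fun j' _ => ?_
          rw [zero_pow (by have := hk j'; omega), mul_zero]
        simpa [h] using hr0
    have hF0 : fourierTrans (m+1) (fun x => φ x) (0 : EuclideanSpace ℝ (Fin (m+1))) ≠ 0 := by
      rw [fourierTrans]
      have hz : ∀ x : EuclideanSpace ℝ (Fin (m+1)),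
          (∑ j, x j * (0 : EuclideanSpace ℝ (Fin (m+1))) j) = 0 := by
        intro x
        refine Finset.sum_eq_zero fun j _ => ?_
        simp
      have : (∫ x : EuclideanSpace ℝ (Fin (m+1)),
          φ x * Complex.exp (-Complex.I * (↑(∑ j, x j * (0 : EuclideanSpace ℝ (Fin (m+1))) j)))) =
          ∫ x : EuclideanSpace ℝ (Fin (m+1)), φ x := by
        refine integral_congr_ae (Filter.Eventually.of_forall fun x => ?_)
        simp only [hz, Complex.ofReal_zero, mul_zero, Complex.exp_zero, mul_one]
      rw [this]
      exact mul_ne_zero (Complex.ofReal_ne_zero.2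
        (ne_of_gt (Real.rpow_pos_of_pos (by positivity) _))) hφint
    have hopen : IsOpen (Function.support fun ξ' : Fin m → ℝ =>
        ‖fourierTrans (m+1) (fun x => φ x) (emb ξ')‖ ^ 2) := hFc.isOpen_support
    refine hopen.measure_pos volume ⟨0, ?_⟩
    simp only [Function.mem_support, h0]
    exact pow_ne_zero _ (norm_ne_zero_iff.2 hF0)
  have hkey : ∀ s : ℝ, 0 < s →
      s ^ ((1+Q)/p - (2+Q)/2) ≤ C * B ^ ((1:ℝ)/p) / A ^ ((1:ℝ)/2) := by
    intro s hs
    set cs : Fin (m+1) → ℝ :=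
      fun i => s ^ (if h : (i : ℕ) < m then ((k ⟨(i : ℕ), h⟩ : ℝ))⁻¹ else 1) with hcs
    have hcpos : ∀ i, 0 < cs i := fun i => Real.rpow_pos_of_pos hs _
    have hcne : ∀ i, cs i ≠ 0 := fun i => (hcpos i).ne'
    have hprodpos : 0 < ∏ i, cs i := Finset.prod_pos fun i _ => hcpos i
    have hccast : ∀ j : Fin m, cs (Fin.castSucc j) = s ^ ((k j : ℝ))⁻¹ := by
      intro j
      simp [hcs, Fin.coe_castSucc, j.isLt, Fin.eta]
    have hclast : cs (Fin.last m) = s := by simp [hcs]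
    have hsum : (∑ i : Fin (m+1),
        (if h : (i : ℕ) < m then ((k ⟨(i : ℕ), h⟩ : ℝ))⁻¹ else 1)) = Q + 1 := by
      rw [Fin.sum_univ_castSucc]
      congr 1
      · rw [hQdef]
        refine Finset.sum_congr rfl fun j _ => ?_
        simp [Fin.coe_castSucc, j.isLt, Fin.eta, one_div]
      · simp
    have hprod : ∏ i, cs i = s ^ (Q + 1) := by
      calc ∏ i, cs i
          = s ^ (∑ i : Fin (m+1),
              (if h : (i : ℕ) < m then ((k ⟨(i : ℕ), h⟩ : ℝ))⁻¹ else 1)) :=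
            (rpow_finset_sum hs _ _).symm
        _ = s ^ (Q + 1) := by rw [hsum]
    have hprodc : ∏ j : Fin m, cs (Fin.castSucc j) = s ^ Q := by
      calc ∏ j : Fin m, cs (Fin.castSucc j)
          = ∏ j : Fin m, s ^ ((k j : ℝ))⁻¹ := Finset.prod_congr rfl fun j _ => hccast j
        _ = s ^ (∑ j : Fin m, ((k j : ℝ))⁻¹) := (rpow_finset_sum hs _ _).symm
        _ = s ^ Q := by
            rw [hQdef]
            congr 1
            exact Finset.sum_congr rfl fun j _ => (one_div _).symm
    have hRscale : ∀ η : Fin m → ℝ, R (fun j => cs (Fin.castSucc j) * η j) = s * R η := by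
      intro η
      rw [hR, hR, Finset.mul_sum]
      refine Finset.sum_congr rfl fun j _ => ?_
      rw [hccast j, mul_pow, ← Real.rpow_natCast (s ^ ((k j : ℝ))⁻¹) (k j),
        ← Real.rpow_mul hs.le, inv_mul_cancel₀ (hk0 j), Real.rpow_one]
      ring
    set D := diagE (m+1) cs hcne with hD
    set ψ := SchwartzMap.compCLMOfContinuousLinearEquiv ℝ D φ with hψdef
    have hψx : ∀ x, ψ x = φ (D x) := fun x => rfl
    set ζfun : EuclideanSpace ℝ (Fin (m+1)) → EuclideanSpace ℝ (Fin (m+1)) := fun ξ =>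
      P.symm (fun j => (cs j)⁻¹ * ξ j) with hζ
    have hζapp : ∀ (ξ : EuclideanSpace ℝ (Fin (m+1))) (j : Fin (m+1)),
        ζfun ξ j = (cs j)⁻¹ * ξ j := fun ξ j => rfl
    have hζc : Continuous ζfun := by
      refine P.symm.continuous.comp (continuous_pi fun j => ?_)
      exact continuous_const.mul ((continuous_apply j).comp P.continuous)
    -- Fourier transform scaling
    have hFTs : ∀ ξ, fourierTrans (m+1) (fun x => ψ x) ξ
        = (((∏ i, cs i)⁻¹ : ℝ) : ℂ) * fourierTrans (m+1) (fun x => φ x) (ζfun ξ) := by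
      intro ξ
      simp only [fourierTrans]
      have hcont : Continuous fun y : EuclideanSpace ℝ (Fin (m+1)) =>
          (φ y * Complex.exp (-Complex.I * ((∑ j, y j * ζfun ξ j : ℝ) : ℂ)) : ℂ) := by
        refine φ.continuous.mul (Complex.continuous_exp.comp ?_)
        refine (continuous_const.mul (Complex.continuous_ofReal.comp ?_))
        exact continuous_finset_sum _ fun j _ =>
          ((continuous_apply j).comp P.continuous).mul continuous_const
      have hcov := cov_E (m+1) cs hcne _ hcont
      have hintg : (∫ x : EuclideanSpace ℝ (Fin (m+1)),
            ψ x * Complex.exp (-Complex.I * ((∑ j, x j * ξ j : ℝ) : ℂ)))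
          = ∫ x : EuclideanSpace ℝ (Fin (m+1)),
            (fun y : EuclideanSpace ℝ (Fin (m+1)) =>
              φ y * Complex.exp (-Complex.I * ((∑ j, y j * ζfun ξ j : ℝ) : ℂ))) (D x) := by
        refine integral_congr_ae (Filter.Eventually.of_forall fun x => ?_)
        simp only [hψx]
        have hsum : (∑ j, (D x) j * ζfun ξ j) = ∑ j, x j * ξ j := by
          refine Finset.sum_congr rfl fun j _ => ?_
          rw [hζapp, hD, diagE_apply, mul_mul_mul_comm, mul_inv_cancel₀ (hcne j), one_mul]
        rw [hsum]
      rw [hintg, hcov, abs_of_pos hprodpos, Complex.real_smul]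
      push_cast
      ring
    -- A scaling
    have hAs : (∫ ξ' : Fin m → ℝ, ‖fourierTrans (m+1) (fun x => ψ x) (emb ξ')‖ ^ 2)
        = s ^ (-(2+Q)) * A := by
      have h1 : (fun ξ' : Fin m → ℝ => ‖fourierTrans (m+1) (fun x => ψ x) (emb ξ')‖ ^ 2)
          = fun ξ' => ((∏ i, cs i)⁻¹)^2 *
              ‖fourierTrans (m+1) (fun x => φ x) (ζfun (emb ξ'))‖ ^ 2 := by
        funext ξ'
        rw [hFTs, norm_mul, Complex.norm_real, Real.norm_eq_abs,
          abs_of_pos (inv_pos.2 hprodpos), mul_pow]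
      rw [h1, integral_const_mul]
      have hg : Continuous fun ξ' : Fin m → ℝ =>
          ‖fourierTrans (m+1) (fun x => φ x) (ζfun (emb ξ'))‖ ^ 2 :=
        (((fourierTrans_continuous (m+1) φ).comp (hζc.comp hembc)).norm).pow 2
      have hcov := cov_pi (fun j : Fin m => cs (Fin.castSucc j)) (fun j => hcne _) _ hg
      have hpoint : (fun η : Fin m → ℝ =>
            (fun ξ' : Fin m → ℝ =>
                ‖fourierTrans (m+1) (fun x => φ x) (ζfun (emb ξ'))‖ ^ 2)
              (fun i => cs (Fin.castSucc i) * η i))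
          = fun η : Fin m → ℝ => ‖fourierTrans (m+1) (fun x => φ x) (emb η)‖ ^ 2 := by
        funext η
        simp only
        have harg : ζfun (emb fun i => cs (Fin.castSucc i) * η i) = emb η := by
          ext i
          simp only [hζapp, hembapp]
          by_cases h : (i : ℕ) < m
          · rw [dif_pos h, dif_pos h]
            have hcast : Fin.castSucc (⟨(i : ℕ), h⟩ : Fin m) = i := by
              apply Fin.ext
              simp
            simp only [hcast]
            rw [inv_mul_cancel_left₀ (hcne i)]
          · rw [dif_neg h, dif_neg h]
            have hi : i = Fin.last m := by
              apply Fin.ext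
              have := i.isLt
              simp only [Fin.val_last]
              omega
            have hre : (R fun l => cs (Fin.castSucc l) * η l) = s * R fun l => η l :=
              hRscale η
            rw [hre, hi, hclast, inv_mul_cancel_left₀ hs.ne']
        rw [harg]
      rw [hpoint] at hcov
      rw [smul_eq_mul] at hcov
      have hinner : (∫ ξ' : Fin m → ℝ,
            ‖fourierTrans (m+1) (fun x => φ x) (ζfun (emb ξ'))‖ ^ 2)
          = (∏ j : Fin m, cs (Fin.castSucc j)) * A := by
        have habs : |∏ j : Fin m, cs (Fin.castSucc j)| = ∏ j : Fin m, cs (Fin.castSucc j) :=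
          abs_of_pos (Finset.prod_pos fun j _ => hcpos _)
        rw [← hAdef] at hcov
        rw [habs] at hcov
        have hpp : (0:ℝ) < ∏ j : Fin m, cs (Fin.castSucc j) :=
          Finset.prod_pos fun j _ => hcpos _
        field_simp at hcov ⊢
        linarith [hcov]
      rw [hinner, hprod, hprodc]
      rw [← Real.rpow_neg hs.le, ← Real.rpow_natCast (s ^ (-(Q+1))) 2,
        ← Real.rpow_mul hs.le, ← mul_assoc, ← Real.rpow_add hs]
      congr 1
      push_cast
      ring
    -- B scaling
    have hBs : (∫ x : EuclideanSpace ℝ (Fin (m+1)), ‖ψ x‖ ^ p) = s ^ (-(1+Q)) * B := by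
      have hcontp : Continuous fun y : EuclideanSpace ℝ (Fin (m+1)) => ‖φ y‖ ^ p :=
        (φ.continuous.norm).rpow_const fun y => Or.inr (by linarith)
      have hcov := cov_E (m+1) cs hcne (fun y => ‖φ y‖ ^ p) hcontp
      have heq : (fun x : EuclideanSpace ℝ (Fin (m+1)) => ‖ψ x‖ ^ p)
          = fun x => (fun y : EuclideanSpace ℝ (Fin (m+1)) => ‖φ y‖ ^ p) (D x) :=
        funext fun x => by rw [hψx]
      rw [heq, hcov, smul_eq_mul, hprod, abs_of_pos (Real.rpow_pos_of_pos hs _),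
        ← Real.rpow_neg hs.le, ← hBdef]
      ring_nf
    -- apply hypothesis
    have hq : (∫ ξ' : Fin m → ℝ, ‖fourierTrans (m+1) (fun x => ψ x) (emb ξ')‖ ^ 2) ^ ((1:ℝ)/2)
        ≤ C * (∫ x : EuclideanSpace ℝ (Fin (m+1)), ‖ψ x‖ ^ p) ^ ((1:ℝ)/p) := hineq ψ
    rw [hAs, hBs] at hq
    rw [Real.mul_rpow (Real.rpow_nonneg hs.le _) hA0,
      Real.mul_rpow (Real.rpow_nonneg hs.le _) hB0,
      ← Real.rpow_mul hs.le, ← Real.rpow_mul hs.le] at hq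
    have hexp1 : -(2+Q) * ((1:ℝ)/2) = -((2+Q)/2) := by ring
    have hexp2 : -(1+Q) * ((1:ℝ)/p) = -((1+Q)/p) := by ring
    rw [hexp1, hexp2, Real.rpow_neg hs.le, Real.rpow_neg hs.le] at hq
    -- now hq : (s ^ ((2+Q)/2))⁻¹ * A^(1/2) ≤ C * ((s ^ ((1+Q)/p))⁻¹ * B^(1/p))
    have hu : (0:ℝ) < s ^ ((2+Q)/2) := Real.rpow_pos_of_pos hs _
    have hv : (0:ℝ) < s ^ ((1+Q)/p) := Real.rpow_pos_of_pos hs _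
    have hA2 : (0:ℝ) < A ^ ((1:ℝ)/2) := Real.rpow_pos_of_pos hApos _
    rw [Real.rpow_sub hs, div_le_div_iff₀ hu hA2]
    -- goal : s^((1+Q)/p)⁻¹-form...
    calc s ^ ((1+Q)/p) * A ^ ((1:ℝ)/2)
        = ((s ^ ((2+Q)/2))⁻¹ * A ^ ((1:ℝ)/2)) * (s ^ ((2+Q)/2) * s ^ ((1+Q)/p)) := by
          field_simp
      _ ≤ (C * ((s ^ ((1+Q)/p))⁻¹ * B ^ ((1:ℝ)/p))) * (s ^ ((2+Q)/2) * s ^ ((1+Q)/p)) :=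
          mul_le_mul_of_nonneg_right hq (by positivity)
      _ = C * B ^ ((1:ℝ)/p) * s ^ ((2+Q)/2) := by
          field_simp
  have hβ : (1+Q)/p - (2+Q)/2 = 0 := exponent_zero hkey
  have hpne : p ≠ 0 := by linarith
  have h2Q : (2:ℝ) + Q ≠ 0 := by linarith
  field_simp at hβ ⊢
  nlinarith [hβ]
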